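/- With F_{n,k} as the number of Frobenius seaweed data for sp_{2n} with exactly k central arcs (up to swap), one has F_{2m+1,m+1} = F_{2m,m} + 1 for all m ≥ 1. -/

import Mathlib

/-- The arc of a block starting at offset `o` of size `m`: the `k`-th nested arc
joins vertices `o+k` and `o+(m-1-k)` (0-based), for `2k+1 < m`. -/
def inBlockArc (o m i j : ℕ) : Prop :=
  ∃ k : ℕ, 2 * k + 1 < m ∧ i = o + k ∧ j = o + (m - 1 - k)

/-- Arcs determined by a composition, drawn block by block starting at offset `o`. -/
def arcs : List ℕ → ℕ → ℕ → ℕ → Prop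
  | [], _, _, _ => False
  | m :: rest, o, i, j => inBlockArc o m i j ∨ arcs rest (o + m) i j

/-- The type-A meander graph of the pair of compositions `(a | b)` on `n` vertices
(0-based): arcs of `a` above the line, arcs of `b` below. -/
def meanderA (n : ℕ) (a b : List ℕ) : SimpleGraph (Fin n) where
  Adj i j := i ≠ j ∧ (arcs a 0 i.val j.val ∨ arcs a 0 j.val i.val ∨
      arcs b 0 i.val j.val ∨ arcs b 0 j.val i.val)
  symm := by
    constructor
    intro i j h
    exact ⟨Ne.symm h.1, by tauto⟩
  loopless := by
    constructor
    intro i h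
    exact h.1 rfl

/-- The symmetric composition `(a₁,…,a_s, 2d, a_s,…,a₁)` of `2n`, where
`d = n - Σ aᵢ` (a zero middle part is omitted). -/
def tildeComp (n : ℕ) (a : List ℕ) : List ℕ :=
  (a ++ [2 * (n - a.sum)] ++ a.reverse).filter (fun x => x != 0)

/-- The type-C meander graph `Γ^C_n(a|b)` on `2n` vertices. -/
def meanderC (n : ℕ) (a b : List ℕ) : SimpleGraph (Fin (2 * n)) :=
  meanderA (2 * n) (tildeComp n a) (tildeComp n b)

/-- The reflection `σ` sending vertex `i` to `2n + 1 - i` (0-based: `i ↦ 2n - 1 - i`). -/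
def sigmaRefl (n : ℕ) : Fin (2 * n) → Fin (2 * n) :=
  fun i => ⟨2 * n - 1 - i.val, by have := i.isLt; omega⟩

/-- A connected component is a cycle if every vertex in it has degree 2. -/
def IsCycleComp {V : Type*} (G : SimpleGraph V) (c : G.ConnectedComponent) : Prop :=
  ∀ v, G.connectedComponentMk v = c → (G.neighborSet v).ncard = 2

/-- A connected component is a segment if it is not a cycle. -/
def IsSegmentComp {V : Type*} (G : SimpleGraph V) (c : G.ConnectedComponent) : Prop :=
  ¬ IsCycleComp G c

/-- The number of cycles of a graph. -/
noncomputable def numCycles {V : Type*} (G : SimpleGraph V) : ℕ :=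
  {c : G.ConnectedComponent | IsCycleComp G c}.ncard

/-- The number of segments of a graph. -/
noncomputable def numSegments {V : Type*} (G : SimpleGraph V) : ℕ :=
  {c : G.ConnectedComponent | IsSegmentComp G c}.ncard

/-- A component of a type-C meander graph is `σ`-stable if `σ` maps it to itself. -/
def SigmaStable (n : ℕ) (G : SimpleGraph (Fin (2 * n))) (c : G.ConnectedComponent) : Prop :=
  ∀ v, G.connectedComponentMk v = c → G.connectedComponentMk (sigmaRefl n v) = c

/-- The number of non-`σ`-stable segments of `Γ^C_n(a|b)`. -/
noncomputable def numNonStableSegments (n : ℕ) (a b : List ℕ) : ℕ :=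
  {c : (meanderC n a b).ConnectedComponent |
    IsSegmentComp (meanderC n a b) c ∧ ¬ SigmaStable n (meanderC n a b) c}.ncard

/-- The topological index `T_n(a|b)` of `Γ^C_n(a|b)`:
(number of cycles) + ½·(number of non-`σ`-stable segments). -/
noncomputable def topIndex (n : ℕ) (a b : List ℕ) : ℚ :=
  (numCycles (meanderC n a b) : ℚ) + (numNonStableSegments n a b : ℚ) / 2

/-- A composition: all parts are positive. -/
def IsComposition (a : List ℕ) : Prop := ∀ x ∈ a, 0 < x

/-- A Frobenius seaweed datum for `sp_{2n}` whose meander graph has `k` central arcs: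
one of the compositions sums to `n`, the other to `n - k`, and `T_n(a|b) = 0`. -/
def FrobDatum (n k : ℕ) (a b : List ℕ) : Prop :=
  IsComposition a ∧ IsComposition b ∧ 1 ≤ k ∧ k ≤ n ∧
    ((a.sum = n - k ∧ b.sum = n) ∨ (b.sum = n - k ∧ a.sum = n)) ∧
    topIndex n a b = 0

/-- Frobenius seaweed data with `k` central arcs, up to swapping the two compositions. -/
def FSet (n k : ℕ) : Set (Sym2 (List ℕ)) :=
  {s | ∃ a b, s = s(a, b) ∧ FrobDatum n k a b}

/-- The number `F_{n,k}` of Frobenius seaweed data with `k` central arcs, up to swap. -/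
noncomputable def Fcount (n k : ℕ) : ℕ := (FSet n k).ncard

section ArcsInfra

lemma arcs_append (l₁ l₂ : List ℕ) (o i j : ℕ) :
    arcs (l₁ ++ l₂) o i j ↔ arcs l₁ o i j ∨ arcs l₂ (o + l₁.sum) i j := by
  induction l₁ generalizing o with
  | nil => simp [arcs]
  | cons x xs ih =>
    simp only [List.cons_append, arcs, List.append_eq, ih, List.sum_cons]
    constructor
    · rintro (h | h | h)
      · exact Or.inl (Or.inl h)
      · exact Or.inl (Or.inr h)
      · exact Or.inr (by rw [show o + (x + xs.sum) = o + x + xs.sum by ring]; exact h)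
    · rintro ((h | h) | h)
      · exact Or.inl h
      · exact Or.inr (Or.inl h)
      · exact Or.inr (Or.inr (by rw [show o + x + xs.sum = o + (x + xs.sum) by ring]; exact h))

lemma arcs_bounds {l : List ℕ} {o i j : ℕ} (h : arcs l o i j) :
    o ≤ i ∧ i < j ∧ j < o + l.sum := by
  induction l generalizing o with
  | nil => exact absurd h id
  | cons x xs ih =>
    rcases h with ⟨k, hk, hi, hj⟩ | h
    · subst hi hj; simp only [List.sum_cons]; omega
    · have := ih h; simp only [List.sum_cons]; omega

lemma arcs_shift (l : List ℕ) (o d i j : ℕ) :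
    arcs l (o + d) (i + d) (j + d) ↔ arcs l o i j := by
  induction l generalizing o with
  | nil => simp [arcs]
  | cons x xs ih =>
    simp only [arcs]
    constructor
    · rintro (⟨k, hk, hi, hj⟩ | h)
      · exact Or.inl ⟨k, hk, by omega, by omega⟩
      · exact Or.inr ((by rw [show o + d + x = o + x + d by ring] at h; exact (ih (o+x)).1 h))
    · rintro (⟨k, hk, hi, hj⟩ | h)
      · exact Or.inl ⟨k, hk, by omega, by omega⟩
      · exact Or.inr (by rw [show o + d + x = o + x + d by ring]; exact (ih (o+x)).2 h)

/-- each vertex is the left endpoint of at most one arc -/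
lemma arcs_right_unique {l : List ℕ} {o i j j' : ℕ} (h : arcs l o i j) (h' : arcs l o i j') :
    j = j' := by
  induction l generalizing o with
  | nil => exact absurd h id
  | cons x xs ih =>
    rcases h with ⟨k, hk, hi, hj⟩ | h
    · rcases h' with ⟨k', hk', hi', hj'⟩ | h'
      · omega
      · have := arcs_bounds h'; omega
    · rcases h' with ⟨k', hk', hi', hj'⟩ | h'
      · have := arcs_bounds h; omega
      · exact ih h h'

lemma arcs_left_unique {l : List ℕ} {o i i' j : ℕ} (h : arcs l o i j) (h' : arcs l o i' j) :
    i = i' := by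
  induction l generalizing o with
  | nil => exact absurd h id
  | cons x xs ih =>
    rcases h with ⟨k, hk, hi, hj⟩ | h
    · rcases h' with ⟨k', hk', hi', hj'⟩ | h'
      · omega
      · have := arcs_bounds h'; omega
    · rcases h' with ⟨k', hk', hi', hj'⟩ | h'
      · have := arcs_bounds h; omega
      · exact ih h h'

/-- a vertex cannot be simultaneously a right endpoint and a left endpoint -/
lemma arcs_not_left_right {l : List ℕ} {o i j k : ℕ} (h : arcs l o i j) (h' : arcs l o j k) :
    False := by
  induction l generalizing o with
  | nil => exact h
  | cons x xs ih =>
    rcases h with ⟨c, hc, hi, hj⟩ | h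
    · rcases h' with ⟨c', hc', hi', hj'⟩ | h'
      · omega
      · have := arcs_bounds h'; omega
    · rcases h' with ⟨c', hc', hi', hj'⟩ | h'
      · have := arcs_bounds h; omega
      · exact ih h h'

lemma arcs_replicate_one (r o i j : ℕ) : ¬ arcs (List.replicate r 1) o i j := by
  induction r generalizing o with
  | zero => exact id
  | succ n ih =>
    rintro (⟨k, hk, _, _⟩ | h)
    · omega
    · exact ih (o + 1) h

lemma filter_eq_self_of_pos {l : List ℕ} (h : ∀ x ∈ l, 0 < x) :
    l.filter (fun x => x != 0) = l := by
  induction l with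
  | nil => rfl
  | cons x xs ih =>
    have hx := h x (by simp)
    simp only [List.filter_cons]
    rw [if_pos (by simp; omega), ih (fun y hy => h y (by simp [hy]))]

end ArcsInfra
section GraphInfra

variable {V : Type*}

lemma reach_closed (G : SimpleGraph V) (S : Set V)
    (hS : ∀ u ∈ S, ∀ w, G.Adj u w → w ∈ S) {v w : V} (hv : v ∈ S) (h : G.Reachable v w) :
    w ∈ S := by
  obtain ⟨p⟩ := h
  induction p with
  | nil => exact hv
  | cons hadj _ ih => exact ih (hS _ hv _ hadj)

lemma mk_eq_mk_iff (G : SimpleGraph V) (v w : V) :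
    G.connectedComponentMk v = G.connectedComponentMk w ↔ G.Reachable v w :=
  SimpleGraph.ConnectedComponent.eq

lemma topIndex_zero_iff (n : ℕ) (a b : List ℕ) :
    topIndex n a b = 0 ↔
      ((∀ c : (meanderC n a b).ConnectedComponent, ¬ IsCycleComp (meanderC n a b) c) ∧
       (∀ c : (meanderC n a b).ConnectedComponent,
          IsSegmentComp (meanderC n a b) c → SigmaStable n (meanderC n a b) c)) := by
  unfold topIndex
  constructor
  · intro h
    have hx : (0:ℚ) ≤ (numCycles (meanderC n a b) : ℚ) := by positivity
    have hy : (0:ℚ) ≤ (numNonStableSegments n a b : ℚ) := by positivity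
    have hx0 : (numCycles (meanderC n a b) : ℚ) = 0 := by linarith
    have hy0 : (numNonStableSegments n a b : ℚ) = 0 := by linarith
    have h1 : numCycles (meanderC n a b) = 0 := by exact_mod_cast hx0
    have h2 : numNonStableSegments n a b = 0 := by exact_mod_cast hy0
    rw [numCycles, Set.ncard_eq_zero (Set.toFinite _)] at h1
    rw [numNonStableSegments, Set.ncard_eq_zero (Set.toFinite _)] at h2
    constructor
    · intro c hc
      exact absurd (Set.eq_empty_iff_forall_notMem.mp h1 c) (fun h => h hc)
    · intro c hc
      by_contra hs
      exact (Set.eq_empty_iff_forall_notMem.mp h2 c) ⟨hc, hs⟩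
  · rintro ⟨h1, h2⟩
    have e1 : numCycles (meanderC n a b) = 0 := by
      rw [numCycles, Set.ncard_eq_zero (Set.toFinite _)]
      exact Set.eq_empty_iff_forall_notMem.mpr (fun c hc => h1 c hc)
    have e2 : numNonStableSegments n a b = 0 := by
      rw [numNonStableSegments, Set.ncard_eq_zero (Set.toFinite _)]
      exact Set.eq_empty_iff_forall_notMem.mpr (fun c hc => hc.2 (h2 c hc.1))
    rw [e1, e2]; norm_num

lemma ncard_pair {x y : V} (h : x ≠ y) : ({x, y} : Set V).ncard = 2 :=
  Set.ncard_pair h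

lemma ncard_singleton_ne_two (x : V) : ({x} : Set V).ncard ≠ 2 := by
  rw [Set.ncard_singleton]; omega

end GraphInfra
section Tilde

lemma comp_reverse {a : List ℕ} (h : IsComposition a) : IsComposition a.reverse :=
  fun x hx => h x (List.mem_reverse.mp hx)

lemma comp_append {a b : List ℕ} (ha : IsComposition a) (hb : IsComposition b) :
    IsComposition (a ++ b) := by
  intro x hx; rcases List.mem_append.mp hx with h | h
  · exact ha x h
  · exact hb x h

lemma tildeComp_of_lt {n : ℕ} {a : List ℕ} (hc : IsComposition a) (h : a.sum < n) :
    tildeComp n a = a ++ [2 * (n - a.sum)] ++ a.reverse := by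
  unfold tildeComp
  apply filter_eq_self_of_pos
  intro x hx
  simp only [List.mem_append, List.mem_singleton] at hx
  rcases hx with (hx | rfl) | hx
  · exact hc x hx
  · omega
  · exact comp_reverse hc x hx

lemma tildeComp_of_eq {n : ℕ} {a : List ℕ} (hc : IsComposition a) (h : a.sum = n) :
    tildeComp n a = a ++ a.reverse := by
  unfold tildeComp
  rw [h, Nat.sub_self, Nat.mul_zero]
  rw [List.filter_append, List.filter_append]
  have h1 : List.filter (fun x => x != 0) a = a := filter_eq_self_of_pos hc
  have h2 : List.filter (fun x => x != 0) a.reverse = a.reverse :=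
    filter_eq_self_of_pos (comp_reverse hc)
  simp [h1, h2]

lemma arcs_offset (l : List ℕ) (o x y : ℕ) :
    arcs l o x y ↔ ∃ x₀ y₀, arcs l 0 x₀ y₀ ∧ x = x₀ + o ∧ y = y₀ + o := by
  constructor
  · intro h
    obtain ⟨h1, h2, h3⟩ := arcs_bounds h
    refine ⟨x - o, y - o, ?_, by omega, by omega⟩
    have := (arcs_shift l 0 o (x - o) (y - o)).mp
    rw [Nat.zero_add] at this
    apply this
    rw [show x - o + o = x by omega, show y - o + o = y by omega]
    exact h
  · rintro ⟨x₀, y₀, h, rfl, rfl⟩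
    have := (arcs_shift l 0 o x₀ y₀).mpr h
    rwa [Nat.zero_add] at this

lemma inBlockArc_one {o x y : ℕ} : ¬ inBlockArc o 1 x y := by
  rintro ⟨k, hk, _, _⟩; omega

lemma arcs_three (a : List ℕ) (c : ℕ) (r : List ℕ) (x y : ℕ) :
    arcs (a ++ [c] ++ r) 0 x y ↔
      arcs a 0 x y ∨ inBlockArc a.sum c x y ∨
        (∃ x₀ y₀, arcs r 0 x₀ y₀ ∧ x = x₀ + (a.sum + c) ∧ y = y₀ + (a.sum + c)) := by
  rw [arcs_append, arcs_append, arcs_offset r]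
  simp only [arcs, or_false, Nat.zero_add, List.sum_append, List.sum_cons, List.sum_nil,
    Nat.add_zero]
  tauto

lemma arcs_two (a r : List ℕ) (x y : ℕ) :
    arcs (a ++ r) 0 x y ↔
      arcs a 0 x y ∨
        (∃ x₀ y₀, arcs r 0 x₀ y₀ ∧ x = x₀ + a.sum ∧ y = y₀ + a.sum) := by
  rw [arcs_append, arcs_offset r, Nat.zero_add]

/-- arcs of the big a-side: `a ++ [2m+2] ++ rev a` -/
lemma arcs_bigA {m : ℕ} {a : List ℕ} (hc : IsComposition a) (hs : a.sum = m) (hm : 1 ≤ m)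
    (x y : ℕ) :
    arcs (tildeComp (2*m+1) a) 0 x y ↔
      (arcs a 0 x y ∨ (∃ k, 2*k+1 < 2*m+2 ∧ x = m + k ∧ y = m + (2*m+1-k)) ∨
       (∃ x₀ y₀, arcs a.reverse 0 x₀ y₀ ∧ x = x₀ + (3*m+2) ∧ y = y₀ + (3*m+2))) := by
  rw [tildeComp_of_lt hc (by omega), arcs_three, hs,
    show 2 * (2*m+1 - m) = 2*m+2 by omega, show m + (2*m+2) = 3*m+2 by omega]
  apply or_congr_right; apply or_congr_left
  constructor
  · rintro ⟨k, hk, rfl, rfl⟩; exact ⟨k, hk, rfl, by omega⟩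
  · rintro ⟨k, hk, rfl, rfl⟩; exact ⟨k, hk, rfl, by omega⟩

/-- arcs of the small a-side: `a ++ [2m] ++ rev a` -/
lemma arcs_smallA {m : ℕ} {a : List ℕ} (hc : IsComposition a) (hs : a.sum = m) (hm : 1 ≤ m)
    (x y : ℕ) :
    arcs (tildeComp (2*m) a) 0 x y ↔
      (arcs a 0 x y ∨ (∃ k, 2*k+1 < 2*m ∧ x = m + k ∧ y = m + (2*m-1-k)) ∨
       (∃ x₀ y₀, arcs a.reverse 0 x₀ y₀ ∧ x = x₀ + 3*m ∧ y = y₀ + 3*m)) := by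
  rw [tildeComp_of_lt hc (by omega), arcs_three, hs,
    show 2 * (2*m - m) = 2*m by omega, show m + 2*m = 3*m by omega]
  apply or_congr_right; apply or_congr_left
  constructor
  · rintro ⟨k, hk, rfl, rfl⟩; exact ⟨k, hk, rfl, by omega⟩
  · rintro ⟨k, hk, rfl, rfl⟩; exact ⟨k, hk, rfl, by omega⟩

/-- arcs of the big b-side where `b` ends in 1: `b ++ [1,1] ++ rev b` -/
lemma arcs_bigB {m : ℕ} {b : List ℕ} (hc : IsComposition b) (hs : b.sum = 2*m)
    (x y : ℕ) :
    arcs (tildeComp (2*m+1) (b ++ [1])) 0 x y ↔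
      (arcs b 0 x y ∨
       (∃ x₀ y₀, arcs b.reverse 0 x₀ y₀ ∧ x = x₀ + (2*m+2) ∧ y = y₀ + (2*m+2))) := by
  have hc1 : IsComposition (b ++ [1]) := comp_append hc (by intro x hx; simp at hx; omega)
  rw [tildeComp_of_eq hc1 (by simp [hs])]
  have hrev : (b ++ [1]).reverse = [1] ++ b.reverse := by
    rw [List.reverse_append]; rfl
  rw [hrev, arcs_append, arcs_append, arcs_append]
  simp only [List.sum_append, List.sum_cons, List.sum_nil, hs, arcs, or_false,
    Nat.zero_add, Nat.add_zero]
  rw [arcs_offset b.reverse]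
  constructor
  · rintro ((h | h) | (h | ⟨x₀, y₀, h, rfl, rfl⟩))
    · exact Or.inl h
    · exact absurd h inBlockArc_one
    · exact absurd h inBlockArc_one
    · exact Or.inr ⟨x₀, y₀, h, by omega, by omega⟩
  · rintro (h | ⟨x₀, y₀, h, rfl, rfl⟩)
    · exact Or.inl (Or.inl h)
    · exact Or.inr (Or.inr ⟨x₀, y₀, h, by omega, by omega⟩)

/-- arcs of the small b-side: `b ++ rev b` -/
lemma arcs_smallB {m : ℕ} {b : List ℕ} (hc : IsComposition b) (hs : b.sum = 2*m)
    (x y : ℕ) :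
    arcs (tildeComp (2*m) b) 0 x y ↔
      (arcs b 0 x y ∨
       (∃ x₀ y₀, arcs b.reverse 0 x₀ y₀ ∧ x = x₀ + 2*m ∧ y = y₀ + 2*m)) := by
  rw [tildeComp_of_eq hc (by omega), arcs_two, hs]

end Tilde
section Surgery

lemma meanderA_adj (n : ℕ) (A B : List ℕ) (i j : Fin n) :
    (meanderA n A B).Adj i j ↔ i ≠ j ∧ (arcs A 0 i.val j.val ∨ arcs A 0 j.val i.val ∨
      arcs B 0 i.val j.val ∨ arcs B 0 j.val i.val) := Iff.rfl

def Ee (m x : ℕ) : ℕ := if x < 2*m then x else x + 2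

lemma Ee_spec (m x : ℕ) : (x < 2*m ∧ Ee m x = x) ∨ (2*m ≤ x ∧ Ee m x = x+2) := by
  by_cases h : x < 2*m <;> simp [Ee, h] <;> omega

variable {m : ℕ} {a b : List ℕ}

lemma arcsA_transfer (hm : 1 ≤ m) (hca : IsComposition a) (hsa : a.sum = m) (x y : ℕ) :
    arcs (tildeComp (2*m) a) 0 x y ↔ arcs (tildeComp (2*m+1) a) 0 (Ee m x) (Ee m y) := by
  have hx := Ee_spec m x
  have hy := Ee_spec m y
  have hrs : a.reverse.sum = m := by rw [List.sum_reverse]; exact hsa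
  rw [arcs_smallA hca hsa hm, arcs_bigA hca hsa hm]
  constructor
  · rintro (h | ⟨k, hk, rfl, rfl⟩ | ⟨x₀, y₀, h, rfl, rfl⟩)
    · have hb := arcs_bounds h
      rw [hsa] at hb
      have hex : Ee m x = x := by omega
      have hey : Ee m y = y := by omega
      rw [hex, hey]; exact Or.inl h
    · refine Or.inr (Or.inl ⟨k, by omega, by omega, by omega⟩)
    · have hb := arcs_bounds h
      rw [hrs] at hb
      refine Or.inr (Or.inr ⟨x₀, y₀, h, by omega, by omega⟩)
  · rintro (h | ⟨k, hk, hex, hey⟩ | ⟨x₀, y₀, h, hex, hey⟩)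
    · have hb := arcs_bounds h
      rw [hsa] at hb
      have hex : Ee m x = x ∧ x < m := by omega
      have hey : Ee m y = y ∧ y < m := by omega
      rw [← hex.1, ← hey.1]; exact Or.inl h
    · refine Or.inr (Or.inl ⟨k, by omega, by omega, by omega⟩)
    · have hb := arcs_bounds h
      rw [hrs] at hb
      refine Or.inr (Or.inr ⟨x₀, y₀, h, by omega, by omega⟩)

lemma arcsB_transfer (hm : 1 ≤ m) (hcb : IsComposition b) (hsb : b.sum = 2*m) (x y : ℕ) :
    arcs (tildeComp (2*m) b) 0 x y ↔ arcs (tildeComp (2*m+1) (b ++ [1])) 0 (Ee m x) (Ee m y) := by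
  have hx := Ee_spec m x
  have hy := Ee_spec m y
  have hrs : b.reverse.sum = 2*m := by rw [List.sum_reverse]; exact hsb
  rw [arcs_smallB hcb hsb, arcs_bigB hcb hsb]
  constructor
  · rintro (h | ⟨x₀, y₀, h, rfl, rfl⟩)
    · have hb := arcs_bounds h
      rw [hsb] at hb
      have hex : Ee m x = x := by omega
      have hey : Ee m y = y := by omega
      rw [hex, hey]; exact Or.inl h
    · have hb := arcs_bounds h
      rw [hrs] at hb
      refine Or.inr ⟨x₀, y₀, h, by omega, by omega⟩
  · rintro (h | ⟨x₀, y₀, h, hex, hey⟩)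
    · have hb := arcs_bounds h
      rw [hsb] at hb
      have hex : Ee m x = x ∧ x < 2*m := by omega
      have hey : Ee m y = y ∧ y < 2*m := by omega
      rw [← hex.1, ← hey.1]; exact Or.inl h
    · have hb := arcs_bounds h
      rw [hrs] at hb
      refine Or.inr ⟨x₀, y₀, h, by omega, by omega⟩

def eSur (m : ℕ) (u : Fin (2*(2*m))) : Fin (2*(2*m+1)) :=
  ⟨Ee m u.val, by have := u.isLt; have := Ee_spec m u.val; omega⟩

lemma eSur_val (u : Fin (2*(2*m))) : (eSur m u).val = Ee m u.val := rfl

lemma adj_transfer (hm : 1 ≤ m) (hca : IsComposition a) (hsa : a.sum = m)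
    (hcb : IsComposition b) (hsb : b.sum = 2*m) (u v : Fin (2*(2*m))) :
    (meanderC (2*m) a b).Adj u v ↔
      (meanderC (2*m+1) a (b ++ [1])).Adj (eSur m u) (eSur m v) := by
  rw [meanderC, meanderC, meanderA_adj, meanderA_adj]
  have h1 := arcsA_transfer hm hca hsa u.val v.val
  have h2 := arcsA_transfer hm hca hsa v.val u.val
  have h3 := arcsB_transfer hm hcb hsb u.val v.val
  have h4 := arcsB_transfer hm hcb hsb v.val u.val
  rw [eSur_val, eSur_val] at *
  have hne : u ≠ v ↔ eSur m u ≠ eSur m v := by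
    constructor
    · intro h hc
      apply h
      have := congrArg Fin.val hc
      rw [eSur_val, eSur_val] at this
      have hu := Ee_spec m u.val
      have hv := Ee_spec m v.val
      exact Fin.ext (by omega)
    · intro h hc; exact h (by rw [hc])
  rw [hne, h1, h2, h3, h4]

end Surgery
section Surgery2

variable {m : ℕ} {a b : List ℕ}

/-- In the big graph, a vertex with value 2m or 2m+1 is adjacent only to the other one. -/
lemma center_adj (hm : 1 ≤ m) (hca : IsComposition a) (hsa : a.sum = m)
    (hcb : IsComposition b) (hsb : b.sum = 2*m) (u v : Fin (2*(2*m+1)))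
    (h : (meanderC (2*m+1) a (b ++ [1])).Adj u v)
    (hu : u.val = 2*m ∨ u.val = 2*m+1) :
    (u.val = 2*m ∧ v.val = 2*m+1) ∨ (u.val = 2*m+1 ∧ v.val = 2*m) := by
  rw [meanderC, meanderA_adj] at h
  obtain ⟨hne, h⟩ := h
  have hrs : a.reverse.sum = m := by rw [List.sum_reverse]; exact hsa
  have hrsb : b.reverse.sum = 2*m := by rw [List.sum_reverse]; exact hsb
  have hne' : u.val ≠ v.val := fun hc => hne (Fin.ext hc)
  rcases h with h | h | h | h
  · rw [arcs_bigA hca hsa hm] at h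
    rcases h with h | ⟨k, hk, h1, h2⟩ | ⟨x₀, y₀, h, h1, h2⟩
    · have hb := arcs_bounds h; rw [hsa] at hb; omega
    · omega
    · have hb := arcs_bounds h; rw [hrs] at hb; omega
  · rw [arcs_bigA hca hsa hm] at h
    rcases h with h | ⟨k, hk, h1, h2⟩ | ⟨x₀, y₀, h, h1, h2⟩
    · have hb := arcs_bounds h; rw [hsa] at hb; omega
    · omega
    · have hb := arcs_bounds h; rw [hrs] at hb; omega
  · rw [arcs_bigB hcb hsb] at h
    rcases h with h | ⟨x₀, y₀, h, h1, h2⟩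
    · have hb := arcs_bounds h; rw [hsb] at hb; omega
    · have hb := arcs_bounds h; rw [hrsb] at hb; omega
  · rw [arcs_bigB hcb hsb] at h
    rcases h with h | ⟨x₀, y₀, h, h1, h2⟩
    · have hb := arcs_bounds h; rw [hsb] at hb; omega
    · have hb := arcs_bounds h; rw [hrsb] at hb; omega

lemma center_edge (hm : 1 ≤ m) (hca : IsComposition a) (hsa : a.sum = m)
    (hcb : IsComposition b) (hsb : b.sum = 2*m) :
    (meanderC (2*m+1) a (b ++ [1])).Adj ⟨2*m, by omega⟩ ⟨2*m+1, by omega⟩ := by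
  rw [meanderC, meanderA_adj]
  refine ⟨by simp [Fin.ext_iff], Or.inl ?_⟩
  rw [arcs_bigA hca hsa hm]
  refine Or.inr (Or.inl ⟨m, by omega, ?_, ?_⟩)
  · show 2*m = m + m; omega
  · show 2*m+1 = m + (2*m+1-m); omega

/-- Reachability transfer, forward direction. -/
lemma reach_fwd (hm : 1 ≤ m) (hca : IsComposition a) (hsa : a.sum = m)
    (hcb : IsComposition b) (hsb : b.sum = 2*m) {u v : Fin (2*(2*m))}
    (h : (meanderC (2*m) a b).Reachable u v) :
    (meanderC (2*m+1) a (b ++ [1])).Reachable (eSur m u) (eSur m v) := by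
  obtain ⟨p⟩ := h
  induction p with
  | nil => exact SimpleGraph.Reachable.refl _
  | cons hadj _ ih =>
    exact ((adj_transfer hm hca hsa hcb hsb _ _).mp hadj).reachable.trans ih

/-- Reachability transfer, backward direction. -/
lemma reach_bwd (hm : 1 ≤ m) (hca : IsComposition a) (hsa : a.sum = m)
    (hcb : IsComposition b) (hsb : b.sum = 2*m) {u : Fin (2*(2*m))}
    {w : Fin (2*(2*m+1))}
    (h : (meanderC (2*m+1) a (b ++ [1])).Reachable (eSur m u) w) :
    ∃ v : Fin (2*(2*m)), w = eSur m v ∧ (meanderC (2*m) a b).Reachable u v := by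
  obtain ⟨p⟩ := h
  generalize hstart : eSur m u = s at p
  induction p generalizing u with
  | nil => exact ⟨u, hstart.symm, SimpleGraph.Reachable.refl u⟩
  | @cons s t w hadj p ih =>
    subst hstart
    -- t is adjacent to eSur m u; t cannot be a center vertex
    have hu := Ee_spec m u.val
    have huv : (eSur m u).val ≠ 2*m ∧ (eSur m u).val ≠ 2*m+1 := by
      rw [eSur_val]; have := u.isLt; omega
    have ht : t.val ≠ 2*m ∧ t.val ≠ 2*m+1 := by
      constructor <;> intro hc
      · have := center_adj hm hca hsa hcb hsb t (eSur m u) hadj.symm (Or.inl hc); omega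
      · have := center_adj hm hca hsa hcb hsb t (eSur m u) hadj.symm (Or.inr hc); omega
    -- so t = eSur m t' for some t'
    have htv := t.isLt
    have : ∃ t' : Fin (2*(2*m)), eSur m t' = t := by
      by_cases hlt : t.val < 2*m
      · exact ⟨⟨t.val, by omega⟩, by simp [eSur, Ee, hlt, Fin.ext_iff]⟩
      · refine ⟨⟨t.val - 2, by omega⟩, ?_⟩
        simp only [eSur, Ee, Fin.ext_iff]
        have : ¬ (t.val - 2 < 2*m) := by omega
        rw [if_neg this]
        omega
    obtain ⟨t', rfl⟩ := this
    have hadj' : (meanderC (2*m) a b).Adj u t' :=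
      (adj_transfer hm hca hsa hcb hsb _ _).mpr hadj
    obtain ⟨v, rfl, hr⟩ := ih rfl
    exact ⟨v, rfl, hadj'.reachable.trans hr⟩

end Surgery2
section Surgery3

variable {m : ℕ} {a b : List ℕ}

lemma eSur_injective : Function.Injective (eSur m) := by
  intro u v h
  have := congrArg Fin.val h
  rw [eSur_val, eSur_val] at this
  have hu := Ee_spec m u.val
  have hv := Ee_spec m v.val
  exact Fin.ext (by omega)

lemma neighborSet_transfer (hm : 1 ≤ m) (hca : IsComposition a) (hsa : a.sum = m)
    (hcb : IsComposition b) (hsb : b.sum = 2*m) (u : Fin (2*(2*m))) :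
    (meanderC (2*m+1) a (b ++ [1])).neighborSet (eSur m u) =
      eSur m '' ((meanderC (2*m) a b).neighborSet u) := by
  ext w
  simp only [SimpleGraph.mem_neighborSet, Set.mem_image]
  constructor
  · intro h
    have hw : w.val ≠ 2*m ∧ w.val ≠ 2*m+1 := by
      have hu := Ee_spec m u.val
      have huv : (eSur m u).val ≠ 2*m ∧ (eSur m u).val ≠ 2*m+1 := by
        rw [eSur_val]; have := u.isLt; omega
      constructor <;> intro hc
      · have := center_adj hm hca hsa hcb hsb w (eSur m u) h.symm (Or.inl hc); omega
      · have := center_adj hm hca hsa hcb hsb w (eSur m u) h.symm (Or.inr hc); omega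
    have htv := w.isLt
    have : ∃ t' : Fin (2*(2*m)), eSur m t' = w := by
      by_cases hlt : w.val < 2*m
      · exact ⟨⟨w.val, by omega⟩, by simp [eSur, Ee, hlt, Fin.ext_iff]⟩
      · refine ⟨⟨w.val - 2, by omega⟩, ?_⟩
        simp only [eSur, Ee, Fin.ext_iff]
        have h2 : ¬ (w.val - 2 < 2*m) := by omega
        rw [if_neg h2]
        omega
    obtain ⟨t', rfl⟩ := this
    exact ⟨t', (adj_transfer hm hca hsa hcb hsb _ _).mpr h, rfl⟩
  · rintro ⟨v, hv, rfl⟩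
    exact (adj_transfer hm hca hsa hcb hsb _ _).mp hv

lemma deg_transfer (hm : 1 ≤ m) (hca : IsComposition a) (hsa : a.sum = m)
    (hcb : IsComposition b) (hsb : b.sum = 2*m) (u : Fin (2*(2*m))) :
    ((meanderC (2*m+1) a (b ++ [1])).neighborSet (eSur m u)).ncard =
      ((meanderC (2*m) a b).neighborSet u).ncard := by
  rw [neighborSet_transfer hm hca hsa hcb hsb u,
    Set.ncard_image_of_injective _ eSur_injective]

lemma center_neighborSet (hm : 1 ≤ m) (hca : IsComposition a) (hsa : a.sum = m)
    (hcb : IsComposition b) (hsb : b.sum = 2*m) :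
    (meanderC (2*m+1) a (b ++ [1])).neighborSet ⟨2*m, by omega⟩ =
      {(⟨2*m+1, by omega⟩ : Fin (2*(2*m+1)))} := by
  ext w
  simp only [SimpleGraph.mem_neighborSet, Set.mem_singleton_iff]
  constructor
  · intro h
    have := center_adj hm hca hsa hcb hsb _ _ h (Or.inl rfl)
    rcases this with ⟨_, h2⟩ | ⟨h1, _⟩
    · exact Fin.ext h2
    · exact absurd h1 (by simp)
  · rintro rfl
    exact center_edge hm hca hsa hcb hsb

lemma sigma_transfer (u : Fin (2*(2*m))) :
    sigmaRefl (2*m+1) (eSur m u) = eSur m (sigmaRefl (2*m) u) := by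
  have hu := Ee_spec m u.val
  have h2 := Ee_spec m (sigmaRefl (2*m) u).val
  have hσ : (sigmaRefl (2*m) u).val = 2*(2*m) - 1 - u.val := rfl
  have := u.isLt
  apply Fin.ext
  rw [eSur_val]
  show 2*(2*m+1) - 1 - (eSur m u).val = _
  rw [eSur_val]
  omega

lemma sigma_center : sigmaRefl (2*m+1) ⟨2*m, by omega⟩ = ⟨2*m+1, by omega⟩ := by
  apply Fin.ext
  show 2*(2*m+1) - 1 - (2*m) = 2*m+1
  omega

lemma sigma_center' : sigmaRefl (2*m+1) ⟨2*m+1, by omega⟩ = ⟨2*m, by omega⟩ := by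
  apply Fin.ext
  show 2*(2*m+1) - 1 - (2*m+1) = 2*m
  omega

end Surgery3
section Surgery4

variable {m : ℕ} {a b : List ℕ}

lemma comp_ind {V : Type*} (G : SimpleGraph V) (p : G.ConnectedComponent → Prop)
    (h : ∀ v, p (G.connectedComponentMk v)) : ∀ c, p c :=
  SimpleGraph.ConnectedComponent.ind h

lemma eSur_surj_off_center (w : Fin (2*(2*m+1))) (h1 : w.val ≠ 2*m) (h2 : w.val ≠ 2*m+1) :
    ∃ u, eSur m u = w := by
  have htv := w.isLt
  by_cases hlt : w.val < 2*m
  · exact ⟨⟨w.val, by omega⟩, by simp [eSur, Ee, hlt, Fin.ext_iff]⟩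
  · refine ⟨⟨w.val - 2, by omega⟩, ?_⟩
    simp only [eSur, Ee, Fin.ext_iff]
    have h3 : ¬ (w.val - 2 < 2*m) := by omega
    rw [if_neg h3]
    omega

variable (hm : 1 ≤ m) (hca : IsComposition a) (hsa : a.sum = m)
    (hcb : IsComposition b) (hsb : b.sum = 2*m)

include hm hca hsa hcb hsb

lemma cycle_transfer (u : Fin (2*(2*m))) :
    IsCycleComp (meanderC (2*m) a b) ((meanderC (2*m) a b).connectedComponentMk u) ↔
      IsCycleComp (meanderC (2*m+1) a (b ++ [1]))
        ((meanderC (2*m+1) a (b ++ [1])).connectedComponentMk (eSur m u)) := by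
  constructor
  · intro h w hw
    rw [mk_eq_mk_iff] at hw
    obtain ⟨v, rfl, hr⟩ := reach_bwd hm hca hsa hcb hsb hw.symm
    rw [deg_transfer hm hca hsa hcb hsb]
    exact h v (by rw [mk_eq_mk_iff]; exact hr.symm)
  · intro h w hw
    rw [mk_eq_mk_iff] at hw
    rw [← deg_transfer hm hca hsa hcb hsb]
    exact h (eSur m w) (by rw [mk_eq_mk_iff]; exact reach_fwd hm hca hsa hcb hsb hw)

lemma stable_transfer (u : Fin (2*(2*m))) :
    SigmaStable (2*m) (meanderC (2*m) a b) ((meanderC (2*m) a b).connectedComponentMk u) ↔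
      SigmaStable (2*m+1) (meanderC (2*m+1) a (b ++ [1]))
        ((meanderC (2*m+1) a (b ++ [1])).connectedComponentMk (eSur m u)) := by
  constructor
  · intro h w hw
    rw [mk_eq_mk_iff] at hw
    obtain ⟨v, rfl, hr⟩ := reach_bwd hm hca hsa hcb hsb hw.symm
    have hs := h v (by rw [mk_eq_mk_iff]; exact hr.symm)
    rw [mk_eq_mk_iff] at hs ⊢
    rw [sigma_transfer]
    exact reach_fwd hm hca hsa hcb hsb hs
  · intro h w hw
    rw [mk_eq_mk_iff] at hw
    have hs := h (eSur m w) (by rw [mk_eq_mk_iff]; exact reach_fwd hm hca hsa hcb hsb hw)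
    rw [mk_eq_mk_iff] at hs ⊢
    rw [sigma_transfer] at hs
    obtain ⟨v, hv, hr⟩ := reach_bwd hm hca hsa hcb hsb hs.symm
    have := eSur_injective hv
    rw [this]
    exact hr.symm

lemma center_comp_cases {w : Fin (2*(2*m+1))}
    (h : (meanderC (2*m+1) a (b ++ [1])).Reachable ⟨2*m, by omega⟩ w) :
    w = ⟨2*m, by omega⟩ ∨ w = ⟨2*m+1, by omega⟩ := by
  refine reach_closed _ {x | x = ⟨2*m, by omega⟩ ∨ x = ⟨2*m+1, by omega⟩} ?_ (Or.inl rfl) h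
  intro x hx y hy
  rcases hx with rfl | rfl
  · rcases center_adj hm hca hsa hcb hsb _ y hy (Or.inl rfl) with ⟨_, h2⟩ | ⟨h1, _⟩
    · exact Or.inr (Fin.ext h2)
    · exact absurd h1 (by simp)
  · rcases center_adj hm hca hsa hcb hsb _ y hy (Or.inr rfl) with ⟨h1, _⟩ | ⟨_, h2⟩
    · exact absurd h1 (by simp)
    · exact Or.inl (Fin.ext h2)

lemma center_segment :
    IsSegmentComp (meanderC (2*m+1) a (b ++ [1]))
      ((meanderC (2*m+1) a (b ++ [1])).connectedComponentMk ⟨2*m, by omega⟩) := by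
  intro h
  have := h ⟨2*m, by omega⟩ rfl
  rw [center_neighborSet hm hca hsa hcb hsb, Set.ncard_singleton] at this
  omega

lemma center_stable :
    SigmaStable (2*m+1) (meanderC (2*m+1) a (b ++ [1]))
      ((meanderC (2*m+1) a (b ++ [1])).connectedComponentMk ⟨2*m, by omega⟩) := by
  intro v hv
  rw [mk_eq_mk_iff] at hv ⊢
  rcases center_comp_cases hm hca hsa hcb hsb hv.symm with rfl | rfl
  · rw [sigma_center]
    exact ((center_edge hm hca hsa hcb hsb).reachable).symm
  · rw [sigma_center']

lemma surgery :
    (topIndex (2*m+1) a (b ++ [1]) = 0) ↔ (topIndex (2*m) a b = 0) := by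
  rw [topIndex_zero_iff, topIndex_zero_iff]
  constructor
  · rintro ⟨h1, h2⟩
    constructor
    · refine comp_ind _ _ ?_
      intro u
      rw [cycle_transfer hm hca hsa hcb hsb]
      exact h1 _
    · refine comp_ind _ _ ?_
      intro u hc
      rw [stable_transfer hm hca hsa hcb hsb]
      apply h2
      intro hcyc
      exact hc ((cycle_transfer hm hca hsa hcb hsb u).mpr hcyc)
  · rintro ⟨h1, h2⟩
    constructor
    · refine comp_ind _ _ ?_
      intro w
      by_cases hw : w.val = 2*m ∨ w.val = 2*m+1
      · have hcc : (meanderC (2*m+1) a (b ++ [1])).connectedComponentMk w =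
            (meanderC (2*m+1) a (b ++ [1])).connectedComponentMk ⟨2*m, by omega⟩ := by
          rw [mk_eq_mk_iff]
          rcases hw with hw | hw
          · rw [show w = (⟨2*m, by omega⟩ : Fin (2*(2*m+1))) from Fin.ext hw]
          · rw [show w = (⟨2*m+1, by omega⟩ : Fin (2*(2*m+1))) from Fin.ext hw]
            exact ((center_edge hm hca hsa hcb hsb).reachable).symm
        rw [hcc]
        exact center_segment hm hca hsa hcb hsb
      · push_neg at hw
        obtain ⟨u, rfl⟩ := eSur_surj_off_center w hw.1 hw.2
        rw [← cycle_transfer hm hca hsa hcb hsb]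
        exact h1 _
    · refine comp_ind _ _ ?_
      intro w hc
      by_cases hw : w.val = 2*m ∨ w.val = 2*m+1
      · have hcc : (meanderC (2*m+1) a (b ++ [1])).connectedComponentMk w =
            (meanderC (2*m+1) a (b ++ [1])).connectedComponentMk ⟨2*m, by omega⟩ := by
          rw [mk_eq_mk_iff]
          rcases hw with hw | hw
          · rw [show w = (⟨2*m, by omega⟩ : Fin (2*(2*m+1))) from Fin.ext hw]
          · rw [show w = (⟨2*m+1, by omega⟩ : Fin (2*(2*m+1))) from Fin.ext hw]
            exact ((center_edge hm hca hsa hcb hsb).reachable).symm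
        rw [hcc]
        exact center_stable hm hca hsa hcb hsb
      · push_neg at hw
        obtain ⟨u, rfl⟩ := eSur_surj_off_center w hw.1 hw.2
        rw [← stable_transfer hm hca hsa hcb hsb]
        apply h2
        intro hcyc
        exact hc ((cycle_transfer hm hca hsa hcb hsb u).mp hcyc)

end Surgery4
section CycleCert

lemma meander_adjA {n : ℕ} {A B : List ℕ} {u v : Fin n}
    (h : arcs A 0 u.val v.val ∨ arcs A 0 v.val u.val) : (meanderA n A B).Adj u v := by
  rw [meanderA_adj]
  rcases h with h | h
  · exact ⟨fun hc => by have := arcs_bounds h; rw [hc] at this; omega, Or.inl h⟩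
  · exact ⟨fun hc => by have := arcs_bounds h; rw [hc] at this; omega, Or.inr (Or.inl h)⟩

lemma meander_adjB {n : ℕ} {A B : List ℕ} {u v : Fin n}
    (h : arcs B 0 u.val v.val ∨ arcs B 0 v.val u.val) : (meanderA n A B).Adj u v := by
  rw [meanderA_adj]
  rcases h with h | h
  · exact ⟨fun hc => by have := arcs_bounds h; rw [hc] at this; omega,
      Or.inr (Or.inr (Or.inl h))⟩
  · exact ⟨fun hc => by have := arcs_bounds h; rw [hc] at this; omega,
      Or.inr (Or.inr (Or.inr h))⟩

/-- If `v` has an `A`-arc to `x` and a `B`-arc to `y`, those are its only neighbors. -/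
lemma meander_neighborSet {n : ℕ} {A B : List ℕ} {v x y : Fin n}
    (hA : arcs A 0 v.val x.val ∨ arcs A 0 x.val v.val)
    (hB : arcs B 0 v.val y.val ∨ arcs B 0 y.val v.val) :
    (meanderA n A B).neighborSet v = {x, y} := by
  ext w
  simp only [SimpleGraph.mem_neighborSet, Set.mem_insert_iff, Set.mem_singleton_iff]
  constructor
  · intro h
    rw [meanderA_adj] at h
    obtain ⟨hne, h⟩ := h
    rcases h with h | h | h | h
    · rcases hA with hA | hA
      · exact Or.inl (Fin.ext (arcs_right_unique h hA).symm).symm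
      · exact absurd (arcs_not_left_right hA h) id
    · rcases hA with hA | hA
      · exact absurd (arcs_not_left_right h hA) id
      · exact Or.inl (Fin.ext (arcs_left_unique h hA))
    · rcases hB with hB | hB
      · exact Or.inr (Fin.ext (arcs_right_unique h hB).symm).symm
      · exact absurd (arcs_not_left_right hB h) id
    · rcases hB with hB | hB
      · exact absurd (arcs_not_left_right h hB) id
      · exact Or.inr (Fin.ext (arcs_left_unique h hB))
  · rintro (rfl | rfl)
    · exact meander_adjA hA
    · exact meander_adjB hB

lemma isCycleComp_of_closed {V : Type*} (G : SimpleGraph V) (S : Set V) (v : V) (hv : v ∈ S)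
    (h : ∀ u ∈ S, (G.neighborSet u).ncard = 2 ∧ ∀ w, G.Adj u w → w ∈ S) :
    IsCycleComp G (G.connectedComponentMk v) := by
  intro w hw
  rw [mk_eq_mk_iff] at hw
  have hwS : w ∈ S := reach_closed G S (fun u hu w h' => (h u hu).2 w h') hv hw.symm
  exact (h w hwS).1

lemma topIndex_ne_zero_of_cycle {n : ℕ} {a b : List ℕ}
    (c : (meanderC n a b).ConnectedComponent) (h : IsCycleComp (meanderC n a b) c) :
    topIndex n a b ≠ 0 := by
  intro h0
  exact (topIndex_zero_iff n a b).mp h0 |>.1 c h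

end CycleCert
section M2

variable {m p : ℕ} {a b₀ : List ℕ}

/-- arcs of the b-side when the composition ends with part `p`. -/
lemma arcs_bsplit (hcb : IsComposition b₀) (hp : 0 < p) (hsb : b₀.sum + p = 2*m+1)
    (x y : ℕ) :
    arcs (tildeComp (2*m+1) (b₀ ++ [p])) 0 x y ↔
      (arcs b₀ 0 x y ∨ inBlockArc (2*m+1-p) p x y ∨ inBlockArc (2*m+1) p x y ∨
       (∃ x₀ y₀, arcs b₀.reverse 0 x₀ y₀ ∧ x = x₀ + (2*m+1+p) ∧ y = y₀ + (2*m+1+p))) := by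
  have hc1 : IsComposition (b₀ ++ [p]) := comp_append hcb (by intro x hx; simp at hx; omega)
  rw [tildeComp_of_eq hc1 (by simp; omega)]
  have hrev : (b₀ ++ [p]).reverse = [p] ++ b₀.reverse := by
    rw [List.reverse_append]; rfl
  rw [hrev, arcs_append, arcs_append, arcs_append]
  simp only [List.sum_append, List.sum_cons, List.sum_nil, arcs, or_false,
    Nat.zero_add, Nat.add_zero]
  rw [arcs_offset b₀.reverse, show b₀.sum = 2*m+1-p by omega,
    show 2*m+1-p+p = 2*m+1 by omega, show 2*m+1+p = 2*m+1+p from rfl]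
  constructor
  · rintro ((h | h) | (h | ⟨x₀, y₀, h, rfl, rfl⟩))
    · exact Or.inl h
    · exact Or.inr (Or.inl h)
    · exact Or.inr (Or.inr (Or.inl h))
    · exact Or.inr (Or.inr (Or.inr ⟨x₀, y₀, h, by omega, by omega⟩))
  · rintro (h | h | h | ⟨x₀, y₀, h, rfl, rfl⟩)
    · exact Or.inl (Or.inl h)
    · exact Or.inl (Or.inr h)
    · exact Or.inr (Or.inl h)
    · exact Or.inr (Or.inr ⟨x₀, y₀, h, by omega, by omega⟩)

lemma M2_cycle (hm : 1 ≤ m) (hca : IsComposition a) (hsa : a.sum = m)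
    (hcb : IsComposition b₀) (hp : 2 ≤ p) (hp2 : p ≤ 2*m) (hsb : b₀.sum + p = 2*m+1) :
    topIndex (2*m+1) a (b₀ ++ [p]) ≠ 0 := by
  set k := p - (m+1) with hk
  have hkp : 2*k+1 < p := by omega
  -- the four vertices of the cycle
  set P1 := 2*m+1-p+k with hP1
  set P2 := 2*m-k with hP2
  set P3 := 2*m+1+k with hP3
  set P4 := 2*m+p-k with hP4
  have hord : P1 < P2 ∧ P2 < P3 ∧ P3 < P4 ∧ P4 < 2*(2*m+1) := by omega
  have hA := arcs_bigA hca hsa hm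
  have hB := arcs_bsplit (m := m) hcb (by omega) hsb
  -- a-arcs (central block): (P1,P4) and (P2,P3)
  have hA14 : arcs (tildeComp (2*m+1) a) 0 P1 P4 := by
    rw [hA]
    exact Or.inr (Or.inl ⟨m+1+k-p, by omega, by omega, by omega⟩)
  have hA23 : arcs (tildeComp (2*m+1) a) 0 P2 P3 := by
    rw [hA]
    exact Or.inr (Or.inl ⟨m-k, by omega, by omega, by omega⟩)
  -- b-arcs: (P1,P2) in the upper p-block, (P3,P4) in the lower p-block
  have hB12 : arcs (tildeComp (2*m+1) (b₀ ++ [p])) 0 P1 P2 := by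
    rw [hB]
    exact Or.inr (Or.inl ⟨k, hkp, by omega, by omega⟩)
  have hB34 : arcs (tildeComp (2*m+1) (b₀ ++ [p])) 0 P3 P4 := by
    rw [hB]
    exact Or.inr (Or.inr (Or.inl ⟨k, hkp, by omega, by omega⟩))
  -- the four vertices as Fin
  set N := 2*(2*m+1) with hN
  set v1 : Fin N := ⟨P1, by omega⟩
  set v2 : Fin N := ⟨P2, by omega⟩
  set v3 : Fin N := ⟨P3, by omega⟩
  set v4 : Fin N := ⟨P4, by omega⟩
  have hn1 : (meanderC (2*m+1) a (b₀ ++ [p])).neighborSet v1 = {v4, v2} :=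
    meander_neighborSet (Or.inl hA14) (Or.inl hB12)
  have hn2 : (meanderC (2*m+1) a (b₀ ++ [p])).neighborSet v2 = {v3, v1} :=
    meander_neighborSet (Or.inl hA23) (Or.inr hB12)
  have hn3 : (meanderC (2*m+1) a (b₀ ++ [p])).neighborSet v3 = {v2, v4} :=
    meander_neighborSet (Or.inr hA23) (Or.inl hB34)
  have hn4 : (meanderC (2*m+1) a (b₀ ++ [p])).neighborSet v4 = {v1, v3} :=
    meander_neighborSet (Or.inr hA14) (Or.inr hB34)
  apply topIndex_ne_zero_of_cycle
    ((meanderC (2*m+1) a (b₀ ++ [p])).connectedComponentMk v1)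
  apply isCycleComp_of_closed _ {v1, v2, v3, v4} v1 (by simp)
  have hne12 : v1 ≠ v2 := fun h => by have := congrArg Fin.val h; simp [v1, v2] at this; omega
  have hne13 : v1 ≠ v3 := fun h => by have := congrArg Fin.val h; simp [v1, v3] at this; omega
  have hne14 : v1 ≠ v4 := fun h => by have := congrArg Fin.val h; simp [v1, v4] at this; omega
  have hne23 : v2 ≠ v3 := fun h => by have := congrArg Fin.val h; simp [v2, v3] at this; omega
  have hne24 : v2 ≠ v4 := fun h => by have := congrArg Fin.val h; simp [v2, v4] at this; omega
  have hne34 : v3 ≠ v4 := fun h => by have := congrArg Fin.val h; simp [v3, v4] at this; omega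
  intro u hu
  rcases hu with rfl | rfl | rfl | rfl
  · refine ⟨by rw [hn1]; exact Set.ncard_pair hne24.symm, ?_⟩
    intro w hw
    have : w ∈ ({v4, v2} : Set (Fin N)) := by rw [← hn1]; exact hw
    rcases this with rfl | rfl <;> simp
  · refine ⟨by rw [hn2]; exact Set.ncard_pair hne13.symm, ?_⟩
    intro w hw
    have : w ∈ ({v3, v1} : Set (Fin N)) := by rw [← hn2]; exact hw
    rcases this with rfl | rfl <;> simp
  · refine ⟨by rw [hn3]; exact Set.ncard_pair hne24, ?_⟩
    intro w hw
    have : w ∈ ({v2, v4} : Set (Fin N)) := by rw [← hn3]; exact hw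
    rcases this with rfl | rfl <;> simp
  · refine ⟨by rw [hn4]; exact Set.ncard_pair hne13, ?_⟩
    intro w hw
    have : w ∈ ({v1, v3} : Set (Fin N)) := by rw [← hn4]; exact hw
    rcases this with rfl | rfl <;> simp

end M2
section M3a

variable {m : ℕ}

lemma comp_decomp {a : List ℕ} (hc : IsComposition a) (hne : a ≠ List.replicate a.sum 1) :
    ∃ o p t, a = List.replicate o 1 ++ p :: t ∧ 2 ≤ p := by
  induction a with
  | nil => simp at hne
  | cons x xs ih =>
    have hx := hc x (by simp)
    by_cases h2 : 2 ≤ x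
    · exact ⟨0, x, xs, by simp, h2⟩
    · have hx1 : x = 1 := by omega
      subst hx1
      have hxs : xs ≠ List.replicate xs.sum 1 := by
        intro hc2
        apply hne
        rw [List.sum_cons, Nat.add_comm, List.replicate_succ, ← hc2]
      obtain ⟨o, p, t, heq, hp⟩ := ih (fun y hy => hc y (by simp [hy])) hxs
      exact ⟨o + 1, p, t, by rw [show o + 1 = 1 + o by omega, List.replicate_add]; simp [heq], hp⟩

lemma arcs_bones (x y : ℕ) :
    arcs (tildeComp (2*m+1) [2*m+1]) 0 x y ↔
      inBlockArc 0 (2*m+1) x y ∨ inBlockArc (2*m+1) (2*m+1) x y := by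
  rw [tildeComp_of_eq (by intro z hz; simp at hz; omega) (by simp)]
  show arcs [2*m+1, 2*m+1] 0 x y ↔ _
  simp only [arcs, or_false, Nat.zero_add]

lemma sum_replicate_one (o : ℕ) : (List.replicate o 1).sum = o := by
  simp

lemma M3_cycle (hm : 1 ≤ m) (a : List ℕ) {o p : ℕ} {t : List ℕ}
    (ha : a = List.replicate o 1 ++ p :: t)
    (hca : IsComposition a) (hp : 2 ≤ p)
    (hsa : a.sum = m) :
    topIndex (2*m+1) a [2*m+1] ≠ 0 := by
  have hsum : a.sum = o + (p + t.sum) := by simp [ha]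
  have hop : o + p ≤ m := by omega
  have hts : t.sum = m - o - p := by omega
  have hA := arcs_bigA hca hsa hm
  have hB := @arcs_bones m
  -- a-arc inside a : (o, o+p-1)
  have hA12 : arcs (tildeComp (2*m+1) a) 0 o (o+p-1) := by
    rw [hA]
    refine Or.inl ?_
    rw [ha, arcs_append, sum_replicate_one]
    refine Or.inr (Or.inl ⟨0, by omega, by omega, by omega⟩)
  -- a-arcs in the central block
  have hA36 : arcs (tildeComp (2*m+1) a) 0 (2*m+1-o-p) (2*m+o+p) := by
    rw [hA]; exact Or.inr (Or.inl ⟨m+1-o-p, by omega, by omega, by omega⟩)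
  have hA45 : arcs (tildeComp (2*m+1) a) 0 (2*m-o) (2*m+1+o) := by
    rw [hA]; exact Or.inr (Or.inl ⟨m-o, by omega, by omega, by omega⟩)
  -- a-arc in rev a : (4m+2-o-p, 4m+1-o)
  have hA78 : arcs (tildeComp (2*m+1) a) 0 (4*m+2-o-p) (4*m+1-o) := by
    rw [hA]
    refine Or.inr (Or.inr ⟨m-o-p, m-1-o, ?_, by omega, by omega⟩)
    have hrv : a.reverse = t.reverse ++ ((p :: List.replicate o 1) : List ℕ) := by
      rw [ha]; simp
    rw [hrv, arcs_append, List.sum_reverse, hts]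
    refine Or.inr (Or.inl ⟨0, by omega, by omega, by omega⟩)
  -- b-arcs
  have hB14 : arcs (tildeComp (2*m+1) [2*m+1]) 0 o (2*m-o) := by
    rw [hB]; exact Or.inl ⟨o, by omega, by omega, by omega⟩
  have hB23 : arcs (tildeComp (2*m+1) [2*m+1]) 0 (o+p-1) (2*m+1-o-p) := by
    rw [hB]; exact Or.inl ⟨o+p-1, by omega, by omega, by omega⟩
  have hB58 : arcs (tildeComp (2*m+1) [2*m+1]) 0 (2*m+1+o) (4*m+1-o) := by
    rw [hB]; exact Or.inr ⟨o, by omega, by omega, by omega⟩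
  have hB67 : arcs (tildeComp (2*m+1) [2*m+1]) 0 (2*m+o+p) (4*m+2-o-p) := by
    rw [hB]; exact Or.inr ⟨o+p-1, by omega, by omega, by omega⟩
  set N := 2*(2*m+1) with hN
  set v1 : Fin N := ⟨o, by omega⟩
  set v2 : Fin N := ⟨o+p-1, by omega⟩
  set v3 : Fin N := ⟨2*m+1-o-p, by omega⟩
  set v4 : Fin N := ⟨2*m-o, by omega⟩
  set v5 : Fin N := ⟨2*m+1+o, by omega⟩
  set v6 : Fin N := ⟨2*m+o+p, by omega⟩
  set v7 : Fin N := ⟨4*m+2-o-p, by omega⟩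
  set v8 : Fin N := ⟨4*m+1-o, by omega⟩
  have hn1 : (meanderC (2*m+1) a [2*m+1]).neighborSet v1 = {v2, v4} :=
    meander_neighborSet (Or.inl hA12) (Or.inl hB14)
  have hn2 : (meanderC (2*m+1) a [2*m+1]).neighborSet v2 = {v1, v3} :=
    meander_neighborSet (Or.inr hA12) (Or.inl hB23)
  have hn3 : (meanderC (2*m+1) a [2*m+1]).neighborSet v3 = {v6, v2} :=
    meander_neighborSet (Or.inl hA36) (Or.inr hB23)
  have hn4 : (meanderC (2*m+1) a [2*m+1]).neighborSet v4 = {v5, v1} :=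
    meander_neighborSet (Or.inl hA45) (Or.inr hB14)
  have hn5 : (meanderC (2*m+1) a [2*m+1]).neighborSet v5 = {v4, v8} :=
    meander_neighborSet (Or.inr hA45) (Or.inl hB58)
  have hn6 : (meanderC (2*m+1) a [2*m+1]).neighborSet v6 = {v3, v7} :=
    meander_neighborSet (Or.inr hA36) (Or.inl hB67)
  have hn7 : (meanderC (2*m+1) a [2*m+1]).neighborSet v7 = {v8, v6} :=
    meander_neighborSet (Or.inl hA78) (Or.inr hB67)
  have hn8 : (meanderC (2*m+1) a [2*m+1]).neighborSet v8 = {v7, v5} :=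
    meander_neighborSet (Or.inr hA78) (Or.inr hB58)
  apply topIndex_ne_zero_of_cycle ((meanderC (2*m+1) a [2*m+1]).connectedComponentMk v1)
  apply isCycleComp_of_closed _ {v1, v2, v3, v4, v5, v6, v7, v8} v1 (by simp)
  have hne24 : v2 ≠ v4 := fun h => by have := congrArg Fin.val h; simp [v2, v4] at this; try omega
  have hne13 : v1 ≠ v3 := fun h => by have := congrArg Fin.val h; simp [v1, v3] at this; try omega
  have hne62 : v6 ≠ v2 := fun h => by have := congrArg Fin.val h; simp [v6, v2] at this; try omega
  have hne51 : v5 ≠ v1 := fun h => by have := congrArg Fin.val h; simp [v5, v1] at this; try omega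
  have hne48 : v4 ≠ v8 := fun h => by have := congrArg Fin.val h; simp [v4, v8] at this; try omega
  have hne37 : v3 ≠ v7 := fun h => by have := congrArg Fin.val h; simp [v3, v7] at this; try omega
  have hne86 : v8 ≠ v6 := fun h => by have := congrArg Fin.val h; simp [v8, v6] at this; try omega
  have hne75 : v7 ≠ v5 := fun h => by have := congrArg Fin.val h; simp [v7, v5] at this; try omega
  intro u hu
  rcases hu with rfl | rfl | rfl | rfl | rfl | rfl | rfl | rfl
  · refine ⟨by rw [hn1]; exact Set.ncard_pair hne24, ?_⟩
    intro w hw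
    have : w ∈ ({v2, v4} : Set (Fin N)) := by rw [← hn1]; exact hw
    rcases this with rfl | rfl <;> simp
  · refine ⟨by rw [hn2]; exact Set.ncard_pair hne13, ?_⟩
    intro w hw
    have : w ∈ ({v1, v3} : Set (Fin N)) := by rw [← hn2]; exact hw
    rcases this with rfl | rfl <;> simp
  · refine ⟨by rw [hn3]; exact Set.ncard_pair hne62, ?_⟩
    intro w hw
    have : w ∈ ({v6, v2} : Set (Fin N)) := by rw [← hn3]; exact hw
    rcases this with rfl | rfl <;> simp
  · refine ⟨by rw [hn4]; exact Set.ncard_pair hne51, ?_⟩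
    intro w hw
    have : w ∈ ({v5, v1} : Set (Fin N)) := by rw [← hn4]; exact hw
    rcases this with rfl | rfl <;> simp
  · refine ⟨by rw [hn5]; exact Set.ncard_pair hne48, ?_⟩
    intro w hw
    have : w ∈ ({v4, v8} : Set (Fin N)) := by rw [← hn5]; exact hw
    rcases this with rfl | rfl <;> simp
  · refine ⟨by rw [hn6]; exact Set.ncard_pair hne37, ?_⟩
    intro w hw
    have : w ∈ ({v3, v7} : Set (Fin N)) := by rw [← hn6]; exact hw
    rcases this with rfl | rfl <;> simp
  · refine ⟨by rw [hn7]; exact Set.ncard_pair hne86, ?_⟩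
    intro w hw
    have : w ∈ ({v8, v6} : Set (Fin N)) := by rw [← hn7]; exact hw
    rcases this with rfl | rfl <;> simp
  · refine ⟨by rw [hn8]; exact Set.ncard_pair hne75, ?_⟩
    intro w hw
    have : w ∈ ({v7, v5} : Set (Fin N)) := by rw [← hn8]; exact hw
    rcases this with rfl | rfl <;> simp

end M3a
section M3b

lemma fin_val_mk {n : ℕ} (x : ℕ) (h : x < n) : (⟨x, h⟩ : Fin n).val = x := rfl

variable {m : ℕ}

lemma ones_comp : IsComposition (List.replicate m 1) := by
  intro x hx
  have := List.eq_of_mem_replicate hx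
  omega

lemma ones_adj (hm : 1 ≤ m) (u v : Fin (2*(2*m+1))) :
    (meanderC (2*m+1) (List.replicate m 1) [2*m+1]).Adj u v ↔
      (u.val ≠ v.val ∧
        ((u.val + v.val = 4*m+1 ∧ m ≤ u.val ∧ m ≤ v.val) ∨
         u.val + v.val = 2*m ∨ u.val + v.val = 6*m+2)) := by
  have hA : ∀ x y : ℕ, arcs (tildeComp (2*m+1) (List.replicate m 1)) 0 x y ↔
      ∃ k, 2*k+1 < 2*m+2 ∧ x = m + k ∧ y = m + (2*m+1-k) := by
    intro x y
    rw [arcs_bigA ones_comp (sum_replicate_one m) hm]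
    constructor
    · rintro (h | h | ⟨x₀, y₀, h, _, _⟩)
      · exact absurd h (arcs_replicate_one _ _ _ _)
      · exact h
      · rw [List.reverse_replicate] at h
        exact absurd h (arcs_replicate_one _ _ _ _)
    · exact fun h => Or.inr (Or.inl h)
  have hB := @arcs_bones m
  rw [meanderC, meanderA_adj]
  constructor
  · rintro ⟨hne, h⟩
    have hnev : u.val ≠ v.val := fun hc => hne (Fin.ext hc)
    refine ⟨hnev, ?_⟩
    have hu := u.isLt
    have hv := v.isLt
    rcases h with h | h | h | h
    · rw [hA] at h; obtain ⟨k, h1, h2, h3⟩ := h; omega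
    · rw [hA] at h; obtain ⟨k, h1, h2, h3⟩ := h; omega
    · rw [hB] at h
      rcases h with ⟨k, h1, h2, h3⟩ | ⟨k, h1, h2, h3⟩ <;> omega
    · rw [hB] at h
      rcases h with ⟨k, h1, h2, h3⟩ | ⟨k, h1, h2, h3⟩ <;> omega
  · rintro ⟨hnev, harith⟩
    have hu := u.isLt
    have hv := v.isLt
    refine ⟨fun hc => hnev (congrArg Fin.val hc), ?_⟩
    rcases Nat.lt_or_ge u.val v.val with hlt | hge
    · rcases harith with ⟨h1, h2, h3⟩ | h | h
      · exact Or.inl ((hA _ _).mpr ⟨u.val - m, by omega, by omega, by omega⟩)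
      · exact Or.inr (Or.inr (Or.inl ((hB _ _).mpr
          (Or.inl ⟨u.val, by omega, by omega, by omega⟩))))
      · exact Or.inr (Or.inr (Or.inl ((hB _ _).mpr
          (Or.inr ⟨u.val - (2*m+1), by omega, by omega, by omega⟩))))
    · rcases harith with ⟨h1, h2, h3⟩ | h | h
      · exact Or.inr (Or.inl ((hA _ _).mpr ⟨v.val - m, by omega, by omega, by omega⟩))
      · exact Or.inr (Or.inr (Or.inr ((hB _ _).mpr
          (Or.inl ⟨v.val, by omega, by omega, by omega⟩))))
      · exact Or.inr (Or.inr (Or.inr ((hB _ _).mpr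
          (Or.inr ⟨v.val - (2*m+1), by omega, by omega, by omega⟩))))

lemma ones_adj_mk (hm : 1 ≤ m) {x y : ℕ} (hx : x < 2*(2*m+1)) (hy : y < 2*(2*m+1))
    (h : x ≠ y ∧ ((x + y = 4*m+1 ∧ m ≤ x ∧ m ≤ y) ∨ x + y = 2*m ∨ x + y = 6*m+2)) :
    (meanderC (2*m+1) (List.replicate m 1) [2*m+1]).Adj ⟨x, hx⟩ ⟨y, hy⟩ :=
  (ones_adj hm _ _).mpr h

lemma ones_endpoint (hm : 1 ≤ m) (v : Fin (2*(2*m+1))) (hv : v.val ≤ m) :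
    ((meanderC (2*m+1) (List.replicate m 1) [2*m+1]).neighborSet v).ncard ≠ 2 := by
  have hvl := v.isLt
  by_cases hvm : v.val = m
  · have : (meanderC (2*m+1) (List.replicate m 1) [2*m+1]).neighborSet v =
        {(⟨3*m+1, by omega⟩ : Fin (2*(2*m+1)))} := by
      ext w
      simp only [SimpleGraph.mem_neighborSet, Set.mem_singleton_iff]
      rw [ones_adj hm]
      have hwl := w.isLt
      have hval : (⟨3*m+1, by omega⟩ : Fin (2*(2*m+1))).val = 3*m+1 := rfl
      rw [Fin.ext_iff, hval]
      constructor
      · rintro ⟨hne, ⟨h1, h2, h3⟩ | h | h⟩ <;> omega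
      · intro hwe
        refine ⟨by omega, Or.inl ⟨by omega, by omega, by omega⟩⟩
    rw [this, Set.ncard_singleton]; omega
  · have : (meanderC (2*m+1) (List.replicate m 1) [2*m+1]).neighborSet v =
        {(⟨2*m - v.val, by omega⟩ : Fin (2*(2*m+1)))} := by
      ext w
      simp only [SimpleGraph.mem_neighborSet, Set.mem_singleton_iff]
      rw [ones_adj hm]
      have hwl := w.isLt
      have hval : (⟨2*m - v.val, by omega⟩ : Fin (2*(2*m+1))).val = 2*m - v.val := rfl
      rw [Fin.ext_iff, hval]
      constructor
      · rintro ⟨hne, ⟨h1, h2, h3⟩ | h | h⟩ <;> omega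
      · intro hwe
        refine ⟨by omega, Or.inr (Or.inl (by omega))⟩
    rw [this, Set.ncard_singleton]; omega

lemma ones_reach_endpoint (hm : 1 ≤ m) (v : Fin (2*(2*m+1))) :
    ∃ u, (meanderC (2*m+1) (List.replicate m 1) [2*m+1]).Reachable v u ∧ u.val ≤ m := by
  have hvl := v.isLt
  by_cases c1 : v.val ≤ m
  · exact ⟨v, SimpleGraph.Reachable.refl v, c1⟩
  by_cases c2 : v.val ≤ 2*m
  · refine ⟨⟨2*m - v.val, by omega⟩, ?_, by show 2*m - v.val ≤ m; omega⟩
    exact (ones_adj_mk hm v.isLt (by omega)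
      ⟨by omega, Or.inr (Or.inl (by omega))⟩ : (meanderC _ _ _).Adj ⟨v.val, v.isLt⟩ _).reachable
  by_cases c3 : v.val = 3*m+1
  · refine ⟨⟨m, by omega⟩, ?_, by show m ≤ m; omega⟩
    exact (ones_adj_mk hm v.isLt (by omega)
      ⟨by omega, Or.inl ⟨by omega, by omega, by omega⟩⟩ :
        (meanderC _ _ _).Adj ⟨v.val, v.isLt⟩ _).reachable
  by_cases c4 : v.val ≤ 3*m
  · -- v ∈ [2m+1, 3m] : two steps
    refine ⟨⟨v.val - (2*m+1), by omega⟩, ?_, by show v.val - (2*m+1) ≤ m; omega⟩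
    have s1 : (meanderC (2*m+1) (List.replicate m 1) [2*m+1]).Adj ⟨v.val, v.isLt⟩
        ⟨4*m+1 - v.val, by omega⟩ :=
      ones_adj_mk hm _ _ ⟨by omega, Or.inl ⟨by omega, by omega, by omega⟩⟩
    have s2 : (meanderC (2*m+1) (List.replicate m 1) [2*m+1]).Adj ⟨4*m+1 - v.val, by omega⟩
        ⟨v.val - (2*m+1), by omega⟩ :=
      ones_adj_mk hm _ _ ⟨by omega, Or.inr (Or.inl (by omega))⟩
    exact s1.reachable.trans s2.reachable
  · -- v ∈ [3m+2, 4m+1] : three steps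
    refine ⟨⟨4*m+1 - v.val, by omega⟩, ?_, by show 4*m+1 - v.val ≤ m; omega⟩
    have s1 : (meanderC (2*m+1) (List.replicate m 1) [2*m+1]).Adj ⟨v.val, v.isLt⟩
        ⟨6*m+2 - v.val, by omega⟩ :=
      ones_adj_mk hm _ _ ⟨by omega, Or.inr (Or.inr (by omega))⟩
    have s2 : (meanderC (2*m+1) (List.replicate m 1) [2*m+1]).Adj ⟨6*m+2 - v.val, by omega⟩
        ⟨v.val - (2*m+1), by omega⟩ :=
      ones_adj_mk hm _ _ ⟨by omega, Or.inl ⟨by omega, by omega, by omega⟩⟩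
    have s3 : (meanderC (2*m+1) (List.replicate m 1) [2*m+1]).Adj ⟨v.val - (2*m+1), by omega⟩
        ⟨4*m+1 - v.val, by omega⟩ :=
      ones_adj_mk hm _ _ ⟨by omega, Or.inr (Or.inl (by omega))⟩
    exact (s1.reachable.trans s2.reachable).trans s3.reachable

lemma ones_sigma_reach (hm : 1 ≤ m) (v : Fin (2*(2*m+1))) :
    (meanderC (2*m+1) (List.replicate m 1) [2*m+1]).Reachable v (sigmaRefl (2*m+1) v) := by
  have hvl := v.isLt
  have hσ : (sigmaRefl (2*m+1) v) = ⟨2*(2*m+1) - 1 - v.val, by omega⟩ := rfl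
  rw [hσ]
  by_cases c1 : v.val ≤ m - 1
  · have s1 : (meanderC (2*m+1) (List.replicate m 1) [2*m+1]).Adj ⟨v.val, v.isLt⟩
        ⟨2*m - v.val, by omega⟩ :=
      ones_adj_mk hm _ _ ⟨by omega, Or.inr (Or.inl (by omega))⟩
    have s2 : (meanderC (2*m+1) (List.replicate m 1) [2*m+1]).Adj ⟨2*m - v.val, by omega⟩
        ⟨2*m+1 + v.val, by omega⟩ :=
      ones_adj_mk hm _ _ ⟨by omega, Or.inl ⟨by omega, by omega, by omega⟩⟩
    have s3 : (meanderC (2*m+1) (List.replicate m 1) [2*m+1]).Adj ⟨2*m+1 + v.val, by omega⟩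
        ⟨2*(2*m+1) - 1 - v.val, by omega⟩ :=
      ones_adj_mk hm _ _ ⟨by omega, Or.inr (Or.inr (by omega))⟩
    exact (s1.reachable.trans s2.reachable).trans s3.reachable
  by_cases c2 : v.val ≤ 3*m+1
  · have s1 : (meanderC (2*m+1) (List.replicate m 1) [2*m+1]).Adj ⟨v.val, v.isLt⟩
        ⟨2*(2*m+1) - 1 - v.val, by omega⟩ :=
      ones_adj_mk hm _ _ ⟨by omega, Or.inl ⟨by omega, by omega, by omega⟩⟩
    exact s1.reachable
  · have s1 : (meanderC (2*m+1) (List.replicate m 1) [2*m+1]).Adj ⟨v.val, v.isLt⟩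
        ⟨6*m+2 - v.val, by omega⟩ :=
      ones_adj_mk hm _ _ ⟨by omega, Or.inr (Or.inr (by omega))⟩
    have s2 : (meanderC (2*m+1) (List.replicate m 1) [2*m+1]).Adj ⟨6*m+2 - v.val, by omega⟩
        ⟨v.val - (2*m+1), by omega⟩ :=
      ones_adj_mk hm _ _ ⟨by omega, Or.inl ⟨by omega, by omega, by omega⟩⟩
    have s3 : (meanderC (2*m+1) (List.replicate m 1) [2*m+1]).Adj ⟨v.val - (2*m+1), by omega⟩
        ⟨2*(2*m+1) - 1 - v.val, by omega⟩ :=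
      ones_adj_mk hm _ _ ⟨by omega, Or.inr (Or.inl (by omega))⟩
    exact (s1.reachable.trans s2.reachable).trans s3.reachable

lemma ones_topIndex (hm : 1 ≤ m) : topIndex (2*m+1) (List.replicate m 1) [2*m+1] = 0 := by
  rw [topIndex_zero_iff]
  constructor
  · refine comp_ind _ _ ?_
    intro v hcyc
    obtain ⟨u, hr, hu⟩ := ones_reach_endpoint hm v
    have := hcyc u (by rw [mk_eq_mk_iff]; exact hr.symm)
    exact ones_endpoint hm u hu this
  · refine comp_ind _ _ ?_
    intro v _ w hw
    rw [mk_eq_mk_iff] at hw ⊢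
    exact ((ones_sigma_reach hm w).symm).trans hw

end M3b
section Assembly

lemma meanderC_comm (n : ℕ) (a b : List ℕ) : meanderC n b a = meanderC n a b := by
  unfold meanderC meanderA
  ext i j
  constructor <;> rintro ⟨h1, h2⟩ <;> exact ⟨h1, by tauto⟩

lemma topIndex_comm (n : ℕ) (a b : List ℕ) : topIndex n b a = topIndex n a b := by
  unfold topIndex numCycles numNonStableSegments SigmaStable
  rw [meanderC_comm]

lemma frob_symm {n k : ℕ} {a b : List ℕ} (h : FrobDatum n k a b) : FrobDatum n k b a := by
  obtain ⟨h1, h2, h3, h4, h5, h6⟩ := h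
  exact ⟨h2, h1, h3, h4, h5.symm, by rw [topIndex_comm]; exact h6⟩

def OSet (n k : ℕ) : Set (List ℕ × List ℕ) :=
  {p | FrobDatum n k p.1 p.2 ∧ p.1.sum = n - k}

lemma OSet_snd_sum {n k : ℕ} (hne : n - k ≠ n) {p : List ℕ × List ℕ} (hp : p ∈ OSet n k) :
    p.2.sum = n := by
  obtain ⟨⟨_, _, _, _, h5, _⟩, hsum⟩ := hp
  rcases h5 with ⟨h, h'⟩ | ⟨h, h'⟩
  · exact h'
  · omega

lemma FSet_eq (n k : ℕ) (hne : n - k ≠ n) : FSet n k = (fun p : List ℕ × List ℕ => s(p.1, p.2)) '' OSet n k := by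
  ext s
  constructor
  · rintro ⟨a, b, rfl, hf⟩
    rcases hf.2.2.2.2.1 with ⟨h1, h2⟩ | ⟨h1, h2⟩
    · exact ⟨(a, b), ⟨hf, h1⟩, rfl⟩
    · exact ⟨(b, a), ⟨frob_symm hf, h1⟩, Sym2.eq_swap.symm⟩
  · rintro ⟨⟨a, b⟩, ⟨hf, hs⟩, rfl⟩
    exact ⟨a, b, rfl, hf⟩

lemma Sym2_injOn (n k : ℕ) (hne : n - k ≠ n) : Set.InjOn (fun p : List ℕ × List ℕ => s(p.1, p.2)) (OSet n k) := by
  rintro ⟨a, b⟩ ha ⟨a', b'⟩ hb h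
  dsimp only at h
  rw [Sym2.eq_iff] at h
  rcases h with ⟨rfl, rfl⟩ | ⟨h1, h2⟩
  · rfl
  · exfalso
    have hs2 : b.sum = n := OSet_snd_sum hne ha
    have hs3 : a'.sum = n - k := hb.2
    rw [← h2] at hs3
    omega

lemma comp_set_finite (s : ℕ) : {l : List ℕ | IsComposition l ∧ l.sum = s}.Finite := by
  rw [← Set.finite_coe_iff]
  refine Finite.of_injective
    (fun l => (⟨l.val, fun hi => l.prop.1 _ hi, l.prop.2⟩ : Composition s)) ?_
  intro l l' h
  have : l.val = l'.val := congrArg Composition.blocks h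
  exact Subtype.ext this

lemma OSet_finite (n k : ℕ) : (OSet n k).Finite := by
  apply Set.Finite.subset (Set.Finite.prod (comp_set_finite (n - k))
    (Set.Finite.union (comp_set_finite n) (comp_set_finite (n - k))))
  rintro ⟨a, b⟩ ⟨⟨h1, h2, h3, h4, h5, h6⟩, hsum⟩
  refine ⟨⟨h1, hsum⟩, ?_⟩
  rcases h5 with ⟨h, h'⟩ | ⟨h, h'⟩
  · exact Or.inl ⟨h2, h'⟩
  · exact Or.inr ⟨h2, h⟩

lemma Fcount_eq_OSet (n k : ℕ) (hne : n - k ≠ n) : Fcount n k = (OSet n k).ncard := by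
  rw [Fcount, FSet_eq n k hne, Set.ncard_image_of_injOn (Sym2_injOn n k hne)]

end Assembly
section Assembly2

lemma comp_sum_zero {l : List ℕ} (hc : IsComposition l) (hs : l.sum = 0) : l = [] := by
  cases l with
  | nil => rfl
  | cons x xs =>
    have := hc x (by simp)
    simp only [List.sum_cons] at hs
    omega

lemma mem_OSet {n k : ℕ} {a b : List ℕ} :
    (a, b) ∈ OSet n k ↔ FrobDatum n k a b ∧ a.sum = n - k := Iff.rfl

lemma OSet_big_eq (m : ℕ) (hm : 1 ≤ m) :
    OSet (2*m+1) (m+1) =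
      (fun p : List ℕ × List ℕ => (p.1, p.2 ++ [1])) '' OSet (2*m) m ∪
      {(List.replicate m 1, [2*m+1])} := by
  ext ⟨a, b⟩
  constructor
  · intro hmem
    obtain ⟨⟨h1, h2, h3, h4, h5, h6⟩, hsum⟩ := mem_OSet.mp hmem
    have hsa : a.sum = m := by omega
    have hsb : b.sum = 2*m+1 := by
      rcases h5 with ⟨h, h'⟩ | ⟨h, h'⟩
      · exact h'
      · omega
    have hbne : b ≠ [] := by
      intro h; rw [h] at hsb; simp at hsb
    have hbdec : b.dropLast ++ [b.getLast hbne] = b := List.dropLast_append_getLast hbne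
    set p := b.getLast hbne with hp
    have hp_pos : 0 < p := h2 p (List.getLast_mem hbne)
    have hcb0 : IsComposition b.dropLast :=
      fun x hx => h2 x ((List.dropLast_sublist b).subset hx)
    have hsb0 : b.dropLast.sum + p = 2*m+1 := by
      rw [← hbdec] at hsb
      simp only [List.sum_append, List.sum_cons, List.sum_nil] at hsb
      omega
    have hp_cases : p = 1 ∨ (2 ≤ p ∧ p ≤ 2*m) ∨ p = 2*m+1 := by omega
    rcases hp_cases with hp1 | ⟨hp2, hp3⟩ | hp4
    · -- b ends in 1
      left
      refine ⟨(a, b.dropLast), mem_OSet.mpr ⟨⟨h1, hcb0, hm, by omega,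
        Or.inl ⟨by omega, by omega⟩, ?_⟩, by omega⟩, ?_⟩
      · rw [← hbdec, hp1] at h6
        exact (surgery hm h1 hsa hcb0 (by omega)).mp h6
      · show (a, b.dropLast ++ [1]) = (a, b)
        rw [← hp1, hbdec]
    · -- middle values of p : impossible
      exfalso
      rw [← hbdec] at h6
      exact M2_cycle hm h1 hsa hcb0 hp2 hp3 (by omega) h6
    · -- p = 2m+1 : b = [2m+1], a must be all ones
      right
      have hb0 : b.dropLast = [] := comp_sum_zero hcb0 (by omega)
      have hb : b = [2*m+1] := by rw [← hbdec, hb0, hp4]; rfl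
      have haeq : a = List.replicate m 1 := by
        by_contra hane
        have : a ≠ List.replicate a.sum 1 := by rw [hsa]; exact hane
        obtain ⟨o, p', t, heq, hp'⟩ := comp_decomp h1 this
        rw [hb] at h6
        exact M3_cycle hm a heq h1 hp' hsa h6
      rw [haeq, hb]
      rfl
  · rintro (⟨⟨a0, b0⟩, hmem0, heq⟩ | h)
    · obtain ⟨⟨h1, h2, h3, h4, h5, h6⟩, hsum⟩ := mem_OSet.mp hmem0
      cases heq
      show (a0, b0 ++ [1]) ∈ OSet (2*m+1) (m+1)
      have hsa : a0.sum = m := by omega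
      have hsb : b0.sum = 2*m := by
        rcases h5 with ⟨h, h'⟩ | ⟨h, h'⟩
        · exact h'
        · omega
      refine mem_OSet.mpr ⟨⟨h1, comp_append h2 (by intro x hx; simp at hx; omega), by omega,
        by omega, Or.inl ⟨by omega, by simp [hsb]⟩, ?_⟩, by omega⟩
      exact (surgery hm h1 hsa h2 hsb).mpr h6
    · rw [Set.mem_singleton_iff] at h
      cases h
      refine mem_OSet.mpr ⟨⟨ones_comp, by intro x hx; simp at hx; omega, by omega, by omega,
        Or.inl ⟨by simp; omega, by simp⟩, ones_topIndex hm⟩, by simp; omega⟩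

end Assembly2

/-- `F_{2m+1,m+1} = F_{2m,m} + 1` for all `m ≥ 1`. -/
theorem Fcount_step (m : ℕ) (hm : 1 ≤ m) :
    Fcount (2 * m + 1) (m + 1) = Fcount (2 * m) m + 1 := by
  have hinj : Set.InjOn (fun p : List ℕ × List ℕ => (p.1, p.2 ++ [1])) (OSet (2*m) m) := by
    rintro ⟨a, b⟩ _ ⟨a', b'⟩ _ h
    simp only [Prod.mk.injEq] at h
    obtain ⟨rfl, h2⟩ := h
    have := congrArg List.dropLast h2
    simp only [List.dropLast_concat] at this
    rw [this]
  have hnotmem : (List.replicate m 1, ([2*m+1] : List ℕ)) ∉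
      (fun p : List ℕ × List ℕ => (p.1, p.2 ++ [1])) '' OSet (2*m) m := by
    rintro ⟨⟨a0, b0⟩, _, heq⟩
    simp only [Prod.mk.injEq] at heq
    have := congrArg List.reverse heq.2
    rw [List.reverse_append] at this
    simp only [List.reverse_cons, List.reverse_nil, List.nil_append,
      List.singleton_append] at this
    rw [List.cons.injEq] at this
    obtain ⟨h1', _⟩ := this
    omega
  have h1 : (2*m+1) - (m+1) ≠ 2*m+1 := by omega
  have h2 : 2*m - m ≠ 2*m := by omega
  rw [Fcount_eq_OSet _ _ h1, Fcount_eq_OSet _ _ h2, OSet_big_eq m hm,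
    Set.union_singleton,
    Set.ncard_insert_of_notMem hnotmem ((OSet_finite _ _).image _),
    Set.ncard_image_of_injOn hinj]
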